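/- Let H be a finite simple graph and β an integer parameter. If an edge (u,v) with u ≠ v, (u,v) ∉ E(H), and deg_H(u) + deg_H(v) < β - 1 is inserted into H, then the potential Φ(H) = (β - 1/2)·∑_v deg_H(v) - ∑_{(u,v)∈E(H)}(deg_H(u)+deg_H(v)) increases by at least 1. -/

import Mathlib

open SimpleGraph Finset
open scoped Classical

/-- The degree of a vertex. -/
noncomputable def deg {V : Type*} (H : SimpleGraph V) (v : V) : ℕ :=
  (H.neighborSet v).ncard

/-- The edge-degree of an edge, as a function on `Sym2 V`. -/
noncomputable def edgeDeg {V : Type*} (H : SimpleGraph V) : Sym2 V → ℝ :=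
  Sym2.lift ⟨fun u v => (deg H u : ℝ) + (deg H v : ℝ), fun u v => by ring⟩

/-- The potential function `Φ(H) = (β - 1/2)·∑_v deg_H(v) - ∑_{(u,v)∈E(H)} (deg_H(u)+deg_H(v))`. -/
noncomputable def Phi {V : Type*} [Fintype V] (β : ℝ) (H : SimpleGraph V) : ℝ :=
  (β - 1/2) * ∑ v, (deg H v : ℝ) - ∑ e ∈ H.edgeFinset, edgeDeg H e

section Aux
variable {V : Type*} [Fintype V]

lemma deg_eq_degree (H : SimpleGraph V) (w : V) : deg H w = H.degree w := by
  rw [deg, SimpleGraph.degree, neighborFinset_def, Set.ncard_eq_toFinset_card']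

omit [Fintype V] in
lemma edgeDeg_mk (H : SimpleGraph V) (a b : V) :
    edgeDeg H s(a, b) = (deg H a : ℝ) + deg H b := rfl

lemma sum_indicator_mem (H : SimpleGraph V) (w : V) :
    ∑ e ∈ H.edgeFinset, (if w ∈ e then (1 : ℝ) else 0) = deg H w := by
  rw [Finset.sum_boole, deg_eq_degree, ← SimpleGraph.card_incidenceFinset_eq_degree,
    incidenceFinset_eq_filter]

end Aux

/-- inserting a non-edge `(u,v)` with `deg_H(u) + deg_H(v) < β - 1`
increases the potential `Φ` by at least `1`. -/
theorem stmt3 {V : Type*} [Fintype V] (H : SimpleGraph V) (β : ℤ) (u v : V)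
    (hne : u ≠ v) (hnadj : ¬ H.Adj u v)
    (hdeg : (deg H u : ℤ) + (deg H v : ℤ) < β - 1) :
    Phi (β : ℝ) H + 1 ≤ Phi (β : ℝ) (H ⊔ SimpleGraph.fromEdgeSet {s(u, v)}) := by
  set H' := H ⊔ SimpleGraph.fromEdgeSet {s(u, v)} with hH'
  have hadj : ∀ a b, H'.Adj a b ↔ H.Adj a b ∨ (s(a, b) = s(u, v) ∧ a ≠ b) := by
    intro a b; simp [hH', SimpleGraph.fromEdgeSet_adj]
  -- neighbor sets
  have hadj_u : ∀ x, H'.Adj u x ↔ H.Adj u x ∨ x = v := by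
    intro x
    rw [hadj]
    constructor
    · rintro (h | ⟨he, hx⟩)
      · exact Or.inl h
      · rcases Sym2.eq_iff.mp he with ⟨-, rfl⟩ | ⟨rfl, rfl⟩
        · exact Or.inr rfl
        · exact absurd rfl hx
    · rintro (h | rfl)
      · exact Or.inl h
      · exact Or.inr ⟨rfl, hne⟩
  have hadj_v : ∀ x, H'.Adj v x ↔ H.Adj v x ∨ x = u := by
    intro x
    rw [hadj]
    constructor
    · rintro (h | ⟨he, hx⟩)
      · exact Or.inl h
      · rcases Sym2.eq_iff.mp he with ⟨hvu, -⟩ | ⟨-, rfl⟩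
        · exact absurd hvu hne.symm
        · exact Or.inr rfl
    · rintro (h | rfl)
      · exact Or.inl h
      · exact Or.inr ⟨Sym2.eq_swap, hne.symm⟩
  have hnsu : H'.neighborSet u = insert v (H.neighborSet u) := by
    ext x
    simp only [SimpleGraph.mem_neighborSet, hadj_u, Set.mem_insert_iff]
    tauto
  have hnsv : H'.neighborSet v = insert u (H.neighborSet v) := by
    ext x
    simp only [SimpleGraph.mem_neighborSet, hadj_v, Set.mem_insert_iff]
    tauto
  have hnso : ∀ w, w ≠ u → w ≠ v → H'.neighborSet w = H.neighborSet w := by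
    intro w hwu hwv
    ext x
    simp only [SimpleGraph.mem_neighborSet, hadj]
    constructor
    · rintro (h | ⟨he, hx⟩)
      · exact h
      · rcases Sym2.eq_iff.mp he with ⟨hwu', -⟩ | ⟨hwv', -⟩
        · exact absurd hwu' hwu
        · exact absurd hwv' hwv
    · exact Or.inl
  -- degree formula
  have hdegw : ∀ w, (deg H' w : ℝ) =
      deg H w + (if w = u then 1 else 0) + (if w = v then 1 else 0) := by
    intro w
    by_cases hwu : w = u
    · subst hwu
      have : v ∉ H.neighborSet w := hnadj
      rw [deg, hnsu, Set.ncard_insert_of_notMem this (Set.toFinite _), ← deg]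
      simp [hne]
    · by_cases hwv : w = v
      · subst hwv
        have : u ∉ H.neighborSet w := fun h => hnadj h.symm
        rw [deg, hnsv, Set.ncard_insert_of_notMem this (Set.toFinite _), ← deg]
        simp [hne.symm, hwu]
      · rw [deg, hnso w hwu hwv, ← deg]
        simp [hwu, hwv]
  -- vertex sum
  have hsum1 : ∑ w, (deg H' w : ℝ) = (∑ w, (deg H w : ℝ)) + 2 := by
    simp only [hdegw, Finset.sum_add_distrib, Finset.sum_ite_eq' Finset.univ,
      Finset.mem_univ, if_true]
    ring
  -- edge finset
  have hne' : s(u, v) ∉ H.edgeFinset := by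
    simp [SimpleGraph.mem_edgeFinset, hnadj]
  have hdiag : ¬ (s(u, v)).IsDiag := by simp [hne]
  have hEF : H'.edgeFinset = insert s(u, v) H.edgeFinset := by
    ext e
    simp only [SimpleGraph.mem_edgeFinset, Finset.mem_insert, hH',
      SimpleGraph.edgeSet_sup, SimpleGraph.edgeSet_fromEdgeSet, Set.mem_union,
      Set.mem_diff, Set.mem_singleton_iff, Set.mem_setOf_eq]
    constructor
    · rintro (h | ⟨rfl, -⟩)
      · exact Or.inr h
      · exact Or.inl rfl
    · rintro (rfl | h)
      · exact Or.inr ⟨rfl, hdiag⟩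
      · exact Or.inl h
  -- per-edge increase on old edges
  have hper : ∀ e ∈ H.edgeFinset, edgeDeg H' e =
      edgeDeg H e + (if u ∈ e then (1:ℝ) else 0) + (if v ∈ e then (1:ℝ) else 0) := by
    intro e he
    induction e with
    | _ a b =>
      have hab : a ≠ b := (H.mem_edgeSet.mp (SimpleGraph.mem_edgeFinset.mp he)).ne
      rw [edgeDeg_mk, edgeDeg_mk, hdegw a, hdegw b]
      simp only [Sym2.mem_iff]
      have h1 : (if u = a ∨ u = b then (1:ℝ) else 0) =
          (if a = u then (1:ℝ) else 0) + (if b = u then 1 else 0) := by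
        by_cases h1 : a = u <;> by_cases h2 : b = u <;> simp_all [eq_comm]
      have h2 : (if v = a ∨ v = b then (1:ℝ) else 0) =
          (if a = v then (1:ℝ) else 0) + (if b = v then 1 else 0) := by
        by_cases h1 : a = v <;> by_cases h2 : b = v <;> simp_all [eq_comm]
      rw [h1, h2]; ring
  -- edge sum
  have hsum2 : ∑ e ∈ H'.edgeFinset, edgeDeg H' e =
      (∑ e ∈ H.edgeFinset, edgeDeg H e) + 2 * ((deg H u : ℝ) + deg H v) + 2 := by
    rw [hEF, Finset.sum_insert hne', Finset.sum_congr rfl hper]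
    rw [edgeDeg_mk, hdegw u, hdegw v]
    simp only [Finset.sum_add_distrib, sum_indicator_mem]
    simp [hne, hne.symm]
    ring
  -- conclude
  have hd : (deg H u : ℝ) + deg H v ≤ (β : ℝ) - 2 := by
    have : (deg H u : ℤ) + (deg H v : ℤ) ≤ β - 2 := by omega
    exact_mod_cast this
  have final : Phi (β:ℝ) H + 1 ≤
      ((β:ℝ) - 1/2) * ((∑ w, (deg H w : ℝ)) + 2) - ∑ e ∈ H'.edgeFinset, edgeDeg H' e := by
    rw [hsum2]; simp only [Phi]; linarith [hd]
  simp only [Phi, ← hH']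
  rw [hsum1]
  convert final using 4
  rfl
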